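/- Let k be a field and D a field extension of k contained in the algebraic closure of k. If D ⊗_k D is a Noetherian ring, then D is finite dimensional over k. -/
import Mathlib
open TensorProduct

set_option maxHeartbeats 1000000

lemma aux_mem (E D : Type*) [Field E] [Field D] [Algebra E D] (d : D)
    (h : (d ⊗ₜ[E] (1 : D)) = 1 ⊗ₜ[E] d) : d ∈ (algebraMap E D).range := by
  obtain ⟨g, hg⟩ := (Algebra.linearMap E D).exists_leftInverse_of_injective
    (LinearMap.ker_eq_bot.mpr (algebraMap E D).injective)
  have hg' : ∀ e : E, g (algebraMap E D e) = e := fun e => congrArg (· e) (congrArg DFunLike.coe hg)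
  let F : D ⊗[E] D →ₗ[E] D := TensorProduct.lift ((LinearMap.lsmul E D).comp g)
  have h1 : F (d ⊗ₜ[E] 1) = algebraMap E D (g d) := by simp [F, Algebra.smul_def]
  have h2 : F (1 ⊗ₜ[E] d) = d := by
    have : g (1 : D) = 1 := by simpa using hg' 1
    simp [F, this]
  exact ⟨g d, by rw [← h1, h, h2]⟩

lemma aux_main (k D : Type*) [Field k] [Field D] [Algebra k D] [Algebra.IsIntegral k D]
    (hNoeth : IsNoetherianRing (D ⊗[k] D)) : FiniteDimensional k D := by
  classical
  let μ : D ⊗[k] D →ₐ[k] D := Algebra.TensorProduct.lmul' k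
  obtain ⟨S, hS⟩ := hNoeth.noetherian (RingHom.ker μ.toRingHom)
  choose t ht using fun x : D ⊗[k] D => TensorProduct.exists_finset x
  let cs : Finset D := S.biUnion (fun s => (t s).image Prod.snd)
  let E : IntermediateField k D := IntermediateField.adjoin k (↑cs : Set D)
  haveI : FiniteDimensional k E :=
    IntermediateField.finiteDimensional_adjoin (fun x _ => Algebra.IsIntegral.isIntegral x)
  let ψ : D ⊗[k] D →ₐ[k] D ⊗[E] D :=
    Algebra.TensorProduct.lift
      ((Algebra.TensorProduct.includeLeft : D →ₐ[k] D ⊗[E] D))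
      ((Algebra.TensorProduct.includeRight : D →ₐ[E] D ⊗[E] D).restrictScalars k)
      (fun x y => Commute.all _ _)
  have hψ : ∀ x y : D, ψ (x ⊗ₜ[k] y) = x ⊗ₜ[E] y := by
    intro x y
    simp [ψ, Algebra.TensorProduct.lift_tmul, Algebra.TensorProduct.tmul_mul_tmul]
  have hgen : ∀ s ∈ S, ψ s = 0 := by
    intro s hs
    have hsker : s ∈ RingHom.ker μ.toRingHom := hS ▸ Ideal.subset_span hs
    have hμs : μ s = 0 := hsker
    have hts := ht s
    have hmem : ∀ p ∈ t s, (p.2 : D) ∈ E := by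
      intro p hp
      apply IntermediateField.subset_adjoin
      exact Finset.mem_biUnion.mpr ⟨s, hs, Finset.mem_image.mpr ⟨p, hp, rfl⟩⟩
    calc ψ s = ψ (∑ p ∈ t s, p.1 ⊗ₜ[k] p.2) := by rw [← hts]
      _ = ∑ p ∈ t s, (p.1 ⊗ₜ[E] (p.2 : D)) := by
          rw [map_sum]; exact Finset.sum_congr rfl (fun p _ => hψ p.1 p.2)
      _ = ∑ p ∈ t s, ((p.1 * p.2) ⊗ₜ[E] (1 : D)) := by
          refine Finset.sum_congr rfl (fun p hp => ?_)
          rw [show (p.2 : D) = (⟨p.2, hmem p hp⟩ : E) • (1 : D) by simp [Algebra.smul_def],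
            TensorProduct.tmul_smul, TensorProduct.smul_tmul']
          congr 1
          rw [Algebra.smul_def, mul_comm, Algebra.smul_def, mul_one]
      _ = (∑ p ∈ t s, p.1 * p.2) ⊗ₜ[E] (1 : D) := by rw [TensorProduct.sum_tmul]
      _ = μ s ⊗ₜ[E] (1 : D) := by
          congr 1
          conv_rhs => rw [hts]
          rw [map_sum]
          exact Finset.sum_congr rfl
            (fun p _ => (Algebra.TensorProduct.lmul'_apply_tmul p.1 p.2).symm)
      _ = 0 := by rw [hμs, TensorProduct.zero_tmul]
  have hker : RingHom.ker μ.toRingHom ≤ RingHom.ker ψ.toRingHom := by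
    rw [← hS]
    exact Submodule.span_le.mpr (fun s hs => hgen s hs)
  have hall : ∀ d : D, d ∈ E := by
    intro d
    have hd : μ ((d ⊗ₜ[k] (1 : D)) - ((1 : D) ⊗ₜ[k] d)) = 0 := by
      rw [map_sub, Algebra.TensorProduct.lmul'_apply_tmul,
        Algebra.TensorProduct.lmul'_apply_tmul]
      ring
    have h0 : ψ ((d ⊗ₜ[k] (1 : D)) - ((1 : D) ⊗ₜ[k] d)) = 0 := hker hd
    rw [map_sub, sub_eq_zero] at h0
    have heq : (d ⊗ₜ[E] (1 : D)) = (1 : D) ⊗ₜ[E] d := by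
      rw [← hψ d 1, ← hψ 1 d]; exact h0
    obtain ⟨e, he⟩ := aux_mem E D d heq
    exact he ▸ e.2
  have hE : E = ⊤ := by ext x; simp [hall x]
  have : FiniteDimensional k (⊤ : IntermediateField k D) := hE ▸ inferInstance
  exact (IntermediateField.topEquiv (F := k) (E := D)).toLinearEquiv.finiteDimensional

theorem stmt4 (k : Type*) [Field k] (D : IntermediateField k (AlgebraicClosure k))
    (hNoeth : IsNoetherianRing (TensorProduct k D D)) :
    FiniteDimensional k D := by
  haveI : Algebra.IsIntegral k (↥D) := by
    constructor
    intro x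
    have h1 : IsIntegral k (algebraMap (↥D) (AlgebraicClosure k) x) :=
      Algebra.IsIntegral.isIntegral _
    exact (isIntegral_algebraMap_iff (algebraMap (↥D) (AlgebraicClosure k)).injective).mp h1
  exact aux_main k (↥D) hNoeth
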